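/- Fix q ∈ (-1,1), s > 0 and x with |x| < 2√(s/(1-q)). For 0 ≤ t₁ < t₂ and y₁, y₂ ∈ ℝ, the rescaled q-Brownian-motion transition density satisfies lim_{ε↓0} ε · κ⁽q⁾_{s+t₁ε, s+t₂ε}(x + y₁ε, x + y₂ε) = (1/(2π)) √(1-q)(t₂-t₁)√(4s-(1-q)x²) / [(t₂-t₁)² + (1-q)(s(y₂-y₁)² - (t₂-t₁)(y₂-y₁)x)]. -/

import Mathlib

noncomputable def phiStar (q : ℝ) (k : ℕ) (t₁ t₂ y₁ y₂ : ℝ) : ℝ :=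
  (t₂ - t₁*q^(2*k))^2 - (1-q)*q^k*(t₂ + t₁*q^(2*k))*y₁*y₂
    + (1-q)*(t₁*y₂^2 + t₂*y₁^2)*q^(2*k)

/-- ψ*_{q,k}(t₁,t₂,y₂) from the q-Brownian-motion transition density. -/
noncomputable def psiStar (q : ℝ) (k : ℕ) (t₁ t₂ y₂ : ℝ) : ℝ :=
  (t₂ - t₁*q^k) * (1 - q^(k+1)) * (t₂*(1+q^k)^2 - (1-q)*y₂^2*q^k)



/-- Transition density κ⁽q⁾_{t₁,t₂}(y₁,y₂) of the q-Brownian motion. -/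
noncomputable def kappaQ (q t₁ t₂ y₁ y₂ : ℝ) : ℝ :=
  (1-q) ^ ((3:ℝ)/2) * (t₂-t₁) / (2*Real.pi)
    * (Real.sqrt (4*t₂ - (1-q)*y₂^2) / phiStar q 0 t₁ t₂ y₁ y₂)
    * ∏' k : ℕ, psiStar q (k+1) t₁ t₂ y₂ / phiStar q (k+1) t₁ t₂ y₁ y₂

/-- ψ* with `q^(k+1)` abstracted as a real variable `Q`. -/
noncomputable def psiT (q a b v Q : ℝ) : ℝ :=
  (b - a*Q) * (1 - q*Q) * (b*(1+Q)^2 - (1-q)*v^2*Q)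

/-- φ* with `q^(k+1)` abstracted as a real variable `Q`. -/
noncomputable def phiT (q a b u v Q : ℝ) : ℝ :=
  (b - a*Q^2)^2 - (1-q)*Q*(b + a*Q^2)*u*v + (1-q)*(a*v^2 + b*u^2)*Q^2

noncomputable def Epoly (q a b u v Q : ℝ) : ℝ :=
  (a*q*Q - a - b*q) * (b*(1+Q)^2 - (1-q)*v^2*Q) + b*(2*b - (1-q)*v^2 + b*Q)
    - (a*Q*(a*Q^2 - 2*b) - (1-q)*(b + a*Q^2)*u*v + (1-q)*(a*v^2 + b*u^2)*Q)

lemma psiStar_succ (q a b v : ℝ) (k : ℕ) :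
    psiStar q (k+1) a b v = psiT q a b v (q^(k+1)) := by
  rw [psiStar, psiT, pow_succ q (k+1)]; ring

lemma phiStar_succ (q a b u v : ℝ) (k : ℕ) :
    phiStar q (k+1) a b u v = phiT q a b u v (q^(k+1)) := by
  rw [phiStar, phiT, mul_comm 2 (k+1), pow_mul]

lemma psiT_sub_phiT (q a b u v Q : ℝ) :
    psiT q a b v Q - phiT q a b u v Q = Q * Epoly q a b u v Q := by
  rw [psiT, phiT, Epoly]; ring

lemma phiT_sos (q a b u v Q σ : ℝ) (hσ : σ^2 = 1-q) :
    4*a*(phiT q a b u v Q)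
      = ((b + a*Q^2)*(σ*u) - 2*a*Q*(σ*v))^2 + (b - a*Q^2)^2*(4*a - σ^2*u^2) := by
  rw [phiT]
  linear_combination (-((b+a*Q^2)^2*u^2 - 4*a*Q*(b+a*Q^2)*u*v + 4*a^2*Q^2*v^2
    - (b-a*Q^2)^2*u^2)) * hσ

/-- log bound near 1 -/
lemma abs_log_le (f : ℝ) (hf : 1/2 ≤ f) : |Real.log f| ≤ 2*|f - 1| := by
  rcases le_or_gt 1 f with h | h
  · rw [abs_of_nonneg (Real.log_nonneg h), abs_of_nonneg (by linarith)]
    have := Real.log_le_sub_one_of_pos (by linarith : (0:ℝ) < f)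
    linarith
  · have hf0 : (0:ℝ) < f := by linarith
    rw [abs_of_nonpos (Real.log_nonpos (by linarith) h.le), abs_of_neg (by linarith)]
    have h2 := Real.log_le_sub_one_of_pos (by positivity : (0:ℝ) < f⁻¹)
    rw [Real.log_inv] at h2
    have : f⁻¹ ≤ 3 - 2*f := by
      rw [inv_le_iff_one_le_mul₀ hf0]
      nlinarith
    linarith
  
lemma hasProd_exp {f : ℕ → ℝ} (hf : ∀ k, 0 < f k) {S : ℝ}
    (h : HasSum (fun k => Real.log (f k)) S) : HasProd f (Real.exp S) := by
  have he : ∀ F : Finset ℕ, ∏ i ∈ F, f i = Real.exp (∑ i ∈ F, Real.log (f i)) := by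
    intro F
    rw [Real.exp_sum]
    exact Finset.prod_congr rfl fun i _ => (Real.exp_log (hf i)).symm
  have := (Real.continuous_exp.continuousAt (x := S)).tendsto.comp h
  exact this.congr fun F => (he F).symm



lemma final_alg (c p S E ε g w : ℝ) (hε : ε ≠ 0) (hg : g ≠ 0) (hp : p ≠ 0) :
    ε * (c * (w*ε) / p * (S / (ε^2*g)) * E) = c*w/p * (S/g) * E := by
  field_simp


lemma final_val (p σ a S d w : ℝ) (hp : p ≠ 0) (hd : d ≠ 0) (hw : w ≠ 0) :
    (1/p) * (σ * a * S) / d = (w*σ)*a/p * (S/d) * w⁻¹ := by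
  field_simp

theorem stmt19 (q : ℝ) (hq : q ∈ Set.Ioo (-1:ℝ) 1) (s : ℝ) (hs : 0 < s)
    (x : ℝ) (hx : |x| < 2 * Real.sqrt (s/(1-q)))
    (t₁ t₂ : ℝ) (ht₁ : 0 ≤ t₁) (ht : t₁ < t₂) (y₁ y₂ : ℝ) :
    Filter.Tendsto
      (fun ε : ℝ => ε * kappaQ q (s + t₁*ε) (s + t₂*ε) (x + y₁*ε) (x + y₂*ε))
      (nhdsWithin 0 (Set.Ioi 0))
      (nhds ((1/(2*Real.pi)) * (Real.sqrt (1-q) * (t₂-t₁) * Real.sqrt (4*s - (1-q)*x^2))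
        / ((t₂-t₁)^2 + (1-q)*(s*(y₂-y₁)^2 - (t₂-t₁)*(y₂-y₁)*x)))) := by
  obtain ⟨hqm1, hq1'⟩ := hq
  have h1q : (0:ℝ) < 1 - q := by linarith
  have hqabs : |q| < 1 := abs_lt.2 ⟨hqm1, hq1'⟩
  have htt : (0:ℝ) < t₂ - t₁ := by linarith
  have hx2 : (1-q)*x^2 < 4*s := by
    have h1 : |x|^2 < (2*Real.sqrt (s/(1-q)))^2 :=
      pow_lt_pow_left₀ hx (abs_nonneg x) two_ne_zero
    rw [sq_abs, mul_pow, Real.sq_sqrt (by positivity : (0:ℝ) ≤ s/(1-q)),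
      show (2:ℝ)^2*(s/(1-q)) = 4*s/(1-q) by ring, lt_div_iff₀ h1q] at h1
    nlinarith [h1]
  set D := (t₂-t₁)^2 + (1-q)*(s*(y₂-y₁)^2 - (t₂-t₁)*(y₂-y₁)*x) with hDdef
  have hD : 0 < D := by
    rw [hDdef]
    nlinarith [mul_nonneg h1q.le (sq_nonneg (2*s*(y₂-y₁) - (t₂-t₁)*x)),
      mul_pos (pow_pos htt 2) (show (0:ℝ) < 4*s - (1-q)*x^2 by linarith), hs]
  clear_value D
  set r := max |q| (1/2) with hrdef
  have hr0 : (0:ℝ) < r := lt_of_lt_of_le one_half_pos (le_max_right _ _)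
  have hr1 : r < 1 := max_lt hqabs (by norm_num)
  have hqr : |q| ≤ r := le_max_left _ _
  clear_value r
  set c₀ := (4*s - (1-q)*x^2)/2 with hc₀def
  have hc₀ : 0 < c₀ := by rw [hc₀def]; linarith
  clear_value c₀
  set U : Set ℝ := {ε | |ε| < 1 ∧ s + t₂*ε < 2*s ∧ (1-q)*(x+y₁*ε)^2 < 4*s - c₀ ∧
      (1-q)*(x+y₂*ε)^2 < 4*s - c₀ ∧
      |(1-q)*(y₂-y₁)*(t₁*y₂-t₂*y₁)*ε| < D/2} with hUdef
  have hUopen : IsOpen U := by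
    rw [hUdef]
    simp only [Set.setOf_and]
    refine (isOpen_lt continuous_abs continuous_const).inter
      ((isOpen_lt (by fun_prop) continuous_const).inter
      ((isOpen_lt (by fun_prop) continuous_const).inter
      ((isOpen_lt (by fun_prop) continuous_const).inter
      (isOpen_lt (by fun_prop) continuous_const))))
  have h0U : (0:ℝ) ∈ U := by
    rw [hUdef]
    simp only [Set.mem_setOf_eq, mul_zero, add_zero, abs_zero]
    exact ⟨by norm_num, by linarith, by rw [hc₀def]; linarith, by rw [hc₀def]; linarith,
      half_pos hD⟩
  obtain ⟨ρ, hρ0, hρball⟩ := Metric.isOpen_iff.1 hUopen 0 h0U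
  set δ := ρ/2 with hδdef
  have hδ0 : 0 < δ := half_pos hρ0
  have hIccU : Set.Icc (0:ℝ) δ ⊆ U := by
    intro ε hε
    apply hρball
    rw [Metric.mem_ball, Real.dist_eq, sub_zero, abs_of_nonneg hε.1]
    have h := hε.2
    rw [hδdef] at h
    linarith
  have hreg : ∀ ε ∈ Set.Icc (0:ℝ) δ,
      s ≤ s + t₁*ε ∧ s + t₁*ε ≤ s + t₂*ε ∧ s + t₂*ε < 2*s ∧
      (1-q)*(x+y₁*ε)^2 < 4*s - c₀ ∧ (1-q)*(x+y₂*ε)^2 < 4*s - c₀ ∧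
      D/2 < D + (1-q)*(y₂-y₁)*(t₁*y₂-t₂*y₁)*ε := by
    intro ε hε
    have hεU := hIccU hε
    rw [hUdef, Set.mem_setOf_eq] at hεU
    obtain ⟨-, h2, h3, h4, h5⟩ := hεU
    have h6 := abs_lt.1 h5
    have hm1 : 0 ≤ t₁*ε := mul_nonneg ht₁ hε.1
    have hm2 : 0 ≤ (t₂-t₁)*ε := mul_nonneg htt.le hε.1
    exact ⟨by linarith, by linarith, h2, h3, h4, by linarith [h6.1]⟩
  clear_value δ
  set K : Set (ℝ × ℝ) := Set.Icc (-r) r ×ˢ Set.Icc (0:ℝ) δ with hKdef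
  have hKcomp : IsCompact K := isCompact_Icc.prod isCompact_Icc
  have hK00 : ((0:ℝ), (0:ℝ)) ∈ K := by
    rw [hKdef]
    exact Set.mk_mem_prod (Set.mem_Icc.2 ⟨by linarith, hr0.le⟩)
      (Set.mem_Icc.2 ⟨le_refl 0, hδ0.le⟩)
  have hKne : K.Nonempty := ⟨_, hK00⟩
  have hmemK : ∀ ε ∈ Set.Icc (0:ℝ) δ, ∀ k : ℕ, ((q^(k+1) : ℝ), ε) ∈ K := by
    intro ε hε k
    have h1 : |q^(k+1)| ≤ r := by
      rw [abs_pow]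
      calc |q|^(k+1) ≤ |q|^1 := pow_le_pow_of_le_one (abs_nonneg q) hqabs.le (by omega)
        _ = |q| := pow_one _
        _ ≤ r := hqr
    rw [hKdef]
    exact Set.mk_mem_prod (Set.mem_Icc.2 (abs_le.1 h1)) hε
  have hKsub : ∀ p ∈ K, ((-r ≤ p.1 ∧ p.1 ≤ r) ∧ (0 ≤ p.2 ∧ p.2 ≤ δ)) := by
    intro p hp
    rw [hKdef, Set.mem_prod, Set.mem_Icc, Set.mem_Icc] at hp
    exact hp
  clear_value K
  -- pointwise positivity of φ on K
  have hφpos : ∀ p ∈ K, 0 < phiT q (s+t₁*p.2) (s+t₂*p.2) (x+y₁*p.2) (x+y₂*p.2) p.1 := by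
    rintro ⟨Q, ε⟩ hp
    obtain ⟨⟨hQ1, hQ2'⟩, hε1, hε2⟩ := hKsub _ hp
    have hε : ε ∈ Set.Icc (0:ℝ) δ := Set.mem_Icc.2 ⟨hε1, hε2⟩
    obtain ⟨ha, hab, hb2, hu, hv, -⟩ := hreg ε hε
    have hQ2 : Q^2 ≤ r^2 := sq_le_sq' hQ1 hQ2'
    have hbpos : (0:ℝ) < s + t₂*ε := by linarith
    have hr2 : r^2 < 1 := pow_lt_one₀ hr0.le hr1 two_ne_zero
    have hbaQ : 0 < (s+t₂*ε) - (s+t₁*ε)*Q^2 := by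
      have e1 := mul_le_mul_of_nonneg_left hQ2 (show (0:ℝ) ≤ s+t₁*ε by linarith)
      have e2 := mul_le_mul_of_nonneg_right hab (sq_nonneg r)
      have e3 := mul_pos hbpos (show (0:ℝ) < 1 - r^2 by linarith)
      linarith [e1, e2, e3]
    have h4u : 0 < 4*(s+t₁*ε) - (1-q)*(x+y₁*ε)^2 := by linarith
    have key := phiT_sos q (s+t₁*ε) (s+t₂*ε) (x+y₁*ε) (x+y₂*ε) Q (Real.sqrt (1-q))
      (Real.sq_sqrt h1q.le)
    rw [Real.sq_sqrt h1q.le] at key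
    show 0 < phiT q (s+t₁*ε) (s+t₂*ε) (x+y₁*ε) (x+y₂*ε) Q
    have h4a : (0:ℝ) < 4*(s+t₁*ε) := by linarith
    have hpos : 0 < 4*(s+t₁*ε) * phiT q (s+t₁*ε) (s+t₂*ε) (x+y₁*ε) (x+y₂*ε) Q := by
      rw [key]
      exact add_pos_of_nonneg_of_pos (sq_nonneg _) (mul_pos (pow_pos hbaQ 2) h4u)
    exact (mul_pos_iff_of_pos_left h4a).mp hpos
  -- pointwise positivity of ψ on K
  have hψpos : ∀ p ∈ K, 0 < psiT q (s+t₁*p.2) (s+t₂*p.2) (x+y₂*p.2) p.1 := by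
    rintro ⟨Q, ε⟩ hp
    obtain ⟨⟨hQ1, hQ2'⟩, hε1, hε2⟩ := hKsub _ hp
    have hε : ε ∈ Set.Icc (0:ℝ) δ := Set.mem_Icc.2 ⟨hε1, hε2⟩
    obtain ⟨ha, hab, hb2, hu, hv, -⟩ := hreg ε hε
    have hQr : |Q| ≤ r := abs_le.2 ⟨hQ1, hQ2'⟩
    have hbpos : (0:ℝ) < s + t₂*ε := by linarith
    have hapos : (0:ℝ) < s + t₁*ε := by linarith
    have hQle : Q ≤ r := hQ2'
    have hQge : -r ≤ Q := hQ1
    have hf1 : 0 < (s+t₂*ε) - (s+t₁*ε)*Q := by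
      have h1 : (s+t₁*ε)*Q ≤ (s+t₁*ε)*r := mul_le_mul_of_nonneg_left hQle hapos.le
      have h2 : (s+t₁*ε)*r ≤ (s+t₂*ε)*r := mul_le_mul_of_nonneg_right hab hr0.le
      have h3 := mul_pos hbpos (show (0:ℝ) < 1 - r by linarith)
      linarith [h1, h2, h3]
    have hf2 : 0 < 1 - q*Q := by
      have h1 : q*Q ≤ |q*Q| := le_abs_self _
      have h2 : |q*Q| = |q| * |Q| := abs_mul q Q
      have h3 : |q| * |Q| ≤ r*r := mul_le_mul hqr hQr (abs_nonneg Q) hr0.le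
      have hrr : r*r < 1 := by
        calc r*r < 1*1 := mul_lt_mul'' hr1 hr1 hr0.le hr0.le
          _ = 1 := by ring
      rw [h2] at h1
      linarith [h1, h3, hrr]
    have hf3 : 0 < (s+t₂*ε)*(1+Q)^2 - (1-q)*(x+y₂*ε)^2*Q := by
      have h4v : (1-q)*(x+y₂*ε)^2 ≤ 4*(s+t₂*ε) := by linarith
      rcases le_or_gt 0 Q with hQ0 | hQ0
      · have h1 : (1-q)*(x+y₂*ε)^2*Q ≤ 4*(s+t₂*ε)*Q := mul_le_mul_of_nonneg_right h4v hQ0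
        have h2 : 0 < (s+t₂*ε)*(1-Q)^2 :=
          mul_pos hbpos (pow_pos (show (0:ℝ) < 1-Q by linarith) 2)
        linarith [h1, h2]
      · have h1 : 0 < (s+t₂*ε)*(1+Q)^2 :=
          mul_pos hbpos (pow_pos (show (0:ℝ) < 1+Q by linarith) 2)
        have h2 : 0 ≤ (1-q)*(x+y₂*ε)^2*(-Q) :=
          mul_nonneg (mul_nonneg h1q.le (sq_nonneg _)) (by linarith)
        linarith [h1, h2]
    show 0 < psiT q (s+t₁*ε) (s+t₂*ε) (x+y₂*ε) Q
    rw [psiT]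
    exact mul_pos (mul_pos hf1 hf2) hf3
  -- continuity of the three auxiliary functions
  have hφcont : Continuous (fun p : ℝ × ℝ =>
      phiT q (s+t₁*p.2) (s+t₂*p.2) (x+y₁*p.2) (x+y₂*p.2) p.1) := by
    simp only [phiT]; fun_prop
  have hψcont : Continuous (fun p : ℝ × ℝ =>
      psiT q (s+t₁*p.2) (s+t₂*p.2) (x+y₂*p.2) p.1) := by
    simp only [psiT]; fun_prop
  have hEcont : Continuous (fun p : ℝ × ℝ =>
      Epoly q (s+t₁*p.2) (s+t₂*p.2) (x+y₁*p.2) (x+y₂*p.2) p.1) := by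
    simp only [Epoly]; fun_prop
  -- extract min/max constants on K
  obtain ⟨pφ, hpφK, hpφmin⟩ := hKcomp.exists_isMinOn hKne hφcont.continuousOn
  obtain ⟨pψ, hpψK, hpψmin⟩ := hKcomp.exists_isMinOn hKne hψcont.continuousOn
  obtain ⟨Cφ, hCφ⟩ := hKcomp.exists_bound_of_continuousOn hφcont.continuousOn
  obtain ⟨Cψ, hCψ⟩ := hKcomp.exists_bound_of_continuousOn hψcont.continuousOn
  obtain ⟨CE, hCE⟩ := hKcomp.exists_bound_of_continuousOn hEcont.continuousOn
  set cφ := phiT q (s+t₁*pφ.2) (s+t₂*pφ.2) (x+y₁*pφ.2) (x+y₂*pφ.2) pφ.1 with hcφdef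
  set cψ := psiT q (s+t₁*pψ.2) (s+t₂*pψ.2) (x+y₂*pψ.2) pψ.1 with hcψdef
  have hcφpos : 0 < cφ := hφpos pφ hpφK
  have hcψpos : 0 < cψ := hψpos pψ hpψK
  have hφge : ∀ p ∈ K, cφ ≤ phiT q (s+t₁*p.2) (s+t₂*p.2) (x+y₁*p.2) (x+y₂*p.2) p.1 :=
    fun p hp => isMinOn_iff.1 hpφmin p hp
  have hψge : ∀ p ∈ K, cψ ≤ psiT q (s+t₁*p.2) (s+t₂*p.2) (x+y₂*p.2) p.1 :=
    fun p hp => isMinOn_iff.1 hpψmin p hp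
  have hφle : ∀ p ∈ K, phiT q (s+t₁*p.2) (s+t₂*p.2) (x+y₁*p.2) (x+y₂*p.2) p.1 ≤ Cφ :=
    fun p hp => le_trans (le_abs_self _) (by simpa [Real.norm_eq_abs] using hCφ p hp)
  have hψle : ∀ p ∈ K, psiT q (s+t₁*p.2) (s+t₂*p.2) (x+y₂*p.2) p.1 ≤ Cψ :=
    fun p hp => le_trans (le_abs_self _) (by simpa [Real.norm_eq_abs] using hCψ p hp)
  have hEle : ∀ p ∈ K, |Epoly q (s+t₁*p.2) (s+t₂*p.2) (x+y₁*p.2) (x+y₂*p.2) p.1| ≤ CE :=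
    fun p hp => by simpa [Real.norm_eq_abs] using hCE p hp
  have hCφ0 : 0 < Cφ := lt_of_lt_of_le hcφpos (hφle pφ hpφK)
  have hCψ0 : 0 < Cψ := lt_of_lt_of_le hcψpos (hψle pψ hpψK)
  have hCE0 : 0 ≤ CE := le_trans (abs_nonneg _) (hEle _ hK00)
  clear_value cφ cψ
  set C := CE / cφ with hCdef
  have hC0 : 0 ≤ C := div_nonneg hCE0 hcφpos.le
  set B := |Real.log (cψ/Cφ)| + |Real.log (Cψ/cφ)| with hBdef
  have hB0 : 0 ≤ B := add_nonneg (abs_nonneg _) (abs_nonneg _)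
  clear_value C B
  -- master per-term estimates
  have hmaster : ∀ ε ∈ Set.Icc (0:ℝ) δ, ∀ k : ℕ,
      0 < psiStar q (k+1) (s+t₁*ε) (s+t₂*ε) (x+y₂*ε) / phiStar q (k+1) (s+t₁*ε) (s+t₂*ε) (x+y₁*ε) (x+y₂*ε) ∧
      |psiStar q (k+1) (s+t₁*ε) (s+t₂*ε) (x+y₂*ε) / phiStar q (k+1) (s+t₁*ε) (s+t₂*ε) (x+y₁*ε) (x+y₂*ε) - 1| ≤ C * r^(k+1) ∧
      |Real.log (psiStar q (k+1) (s+t₁*ε) (s+t₂*ε) (x+y₂*ε) / phiStar q (k+1) (s+t₁*ε) (s+t₂*ε) (x+y₁*ε) (x+y₂*ε))| ≤ B := by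
    intro ε hε k
    have hm := hmemK ε hε k
    have hφp : 0 < phiT q (s+t₁*ε) (s+t₂*ε) (x+y₁*ε) (x+y₂*ε) (q^(k+1)) := hφpos ((q:ℝ)^(k+1), ε) hm
    have hψp : 0 < psiT q (s+t₁*ε) (s+t₂*ε) (x+y₂*ε) (q^(k+1)) := hψpos ((q:ℝ)^(k+1), ε) hm
    have hφge' : cφ ≤ phiT q (s+t₁*ε) (s+t₂*ε) (x+y₁*ε) (x+y₂*ε) (q^(k+1)) := hφge ((q:ℝ)^(k+1), ε) hm
    have hψge' : cψ ≤ psiT q (s+t₁*ε) (s+t₂*ε) (x+y₂*ε) (q^(k+1)) := hψge ((q:ℝ)^(k+1), ε) hm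
    have hφle' : phiT q (s+t₁*ε) (s+t₂*ε) (x+y₁*ε) (x+y₂*ε) (q^(k+1)) ≤ Cφ := hφle ((q:ℝ)^(k+1), ε) hm
    have hψle' : psiT q (s+t₁*ε) (s+t₂*ε) (x+y₂*ε) (q^(k+1)) ≤ Cψ := hψle ((q:ℝ)^(k+1), ε) hm
    have hE' : |Epoly q (s+t₁*ε) (s+t₂*ε) (x+y₁*ε) (x+y₂*ε) (q^(k+1))| ≤ CE := hEle ((q:ℝ)^(k+1), ε) hm
    rw [psiStar_succ, phiStar_succ]
    have hne := ne_of_gt hφp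
    refine ⟨div_pos hψp hφp, ?_, ?_⟩
    · rw [div_sub_one hne, abs_div, abs_of_pos hφp, psiT_sub_phiT, abs_mul]
      have hQr : |q^(k+1)| ≤ r^(k+1) := by
        rw [abs_pow]; exact pow_le_pow_left₀ (abs_nonneg q) hqr _
      calc |q^(k+1)| * |Epoly q (s+t₁*ε) (s+t₂*ε) (x+y₁*ε) (x+y₂*ε) (q^(k+1))|
            / phiT q (s+t₁*ε) (s+t₂*ε) (x+y₁*ε) (x+y₂*ε) (q^(k+1))
          ≤ (r^(k+1) * CE) / cφ := by
            apply div_le_div₀ (mul_nonneg (pow_nonneg hr0.le _) hCE0)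
              (mul_le_mul hQr hE' (abs_nonneg _) (pow_nonneg hr0.le _)) hcφpos hφge'
        _ = C * r^(k+1) := by rw [hCdef]; ring
    · have hmle : cψ/Cφ ≤ psiT q (s+t₁*ε) (s+t₂*ε) (x+y₂*ε) (q^(k+1)) /
          phiT q (s+t₁*ε) (s+t₂*ε) (x+y₁*ε) (x+y₂*ε) (q^(k+1)) :=
        div_le_div₀ hψp.le hψge' hφp hφle'
      have hMge : psiT q (s+t₁*ε) (s+t₂*ε) (x+y₂*ε) (q^(k+1)) /
          phiT q (s+t₁*ε) (s+t₂*ε) (x+y₁*ε) (x+y₂*ε) (q^(k+1)) ≤ Cψ/cφ :=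
        div_le_div₀ hCψ0.le hψle' hcφpos hφge'
      rw [abs_le]
      constructor
      · calc -B ≤ -|Real.log (cψ/Cφ)| := by rw [hBdef]; simp [abs_nonneg]
          _ ≤ Real.log (cψ/Cφ) := neg_abs_le _
          _ ≤ _ := Real.log_le_log (div_pos hcψpos hCφ0) hmle
      · calc Real.log _ ≤ Real.log (Cψ/cφ) :=
              Real.log_le_log (div_pos hψp hφp) hMge
          _ ≤ |Real.log (Cψ/cφ)| := le_abs_self _
          _ ≤ B := by rw [hBdef]; simp [abs_nonneg]
  -- geometric bound
  obtain ⟨n₀, hn₀⟩ := exists_pow_lt_of_lt_one (show (0:ℝ) < 1/(2*(C+1)) by positivity) hr1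
  have hhalf : ∀ k : ℕ, n₀ ≤ k → C * r^(k+1) ≤ 1/2 := by
    intro k hk
    have h1 : r^(k+1) ≤ r^n₀ := pow_le_pow_of_le_one hr0.le hr1.le (by omega)
    have h2 : C * r^(k+1) ≤ C * r^n₀ := mul_le_mul_of_nonneg_left h1 hC0
    have h3 : C * r^n₀ ≤ C * (1/(2*(C+1))) := mul_le_mul_of_nonneg_left hn₀.le hC0
    have h4 : C * (1/(2*(C+1))) ≤ 1/2 := by
      rw [mul_one_div, div_le_div_iff₀ (by positivity) (by norm_num)]
      linarith
    linarith
  set Bb := max (2*C) (B / r^n₀) with hBbdef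
  set bnd : ℕ → ℝ := fun k => Bb * r^(k+1) with hbnddef
  have hbnd_sum : Summable bnd := by
    have h := (summable_geometric_of_lt_one hr0.le hr1).mul_left (Bb*r)
    exact h.congr (fun k => by simp only [hbnddef]; rw [pow_succ]; ring)
  have hbnd : ∀ ε ∈ Set.Icc (0:ℝ) δ, ∀ k : ℕ,
      |Real.log (psiStar q (k+1) (s+t₁*ε) (s+t₂*ε) (x+y₂*ε) / phiStar q (k+1) (s+t₁*ε) (s+t₂*ε) (x+y₁*ε) (x+y₂*ε))| ≤ bnd k := by
    intro ε hε k
    obtain ⟨hfp, hf1, hfB⟩ := hmaster ε hε k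
    simp only [hbnddef]
    rcases le_or_gt n₀ k with hk | hk
    · have h12 : C * r^(k+1) ≤ 1/2 := hhalf k hk
      have hfhalf : 1/2 ≤ psiStar q (k+1) (s+t₁*ε) (s+t₂*ε) (x+y₂*ε) / phiStar q (k+1) (s+t₁*ε) (s+t₂*ε) (x+y₁*ε) (x+y₂*ε) := by
        have h := abs_le.1 hf1
        linarith [h.1]
      calc |Real.log (psiStar q (k+1) (s+t₁*ε) (s+t₂*ε) (x+y₂*ε) / phiStar q (k+1) (s+t₁*ε) (s+t₂*ε) (x+y₁*ε) (x+y₂*ε))| ≤ 2*|psiStar q (k+1) (s+t₁*ε) (s+t₂*ε) (x+y₂*ε) / phiStar q (k+1) (s+t₁*ε) (s+t₂*ε) (x+y₁*ε) (x+y₂*ε) - 1| := abs_log_le _ hfhalf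
        _ ≤ 2*(C*r^(k+1)) := by linarith
        _ = (2*C)*r^(k+1) := by ring
        _ ≤ Bb * r^(k+1) :=
            mul_le_mul_of_nonneg_right (le_max_left _ _) (pow_nonneg hr0.le _)
    · have h1 : r^n₀ ≤ r^(k+1) := pow_le_pow_of_le_one hr0.le hr1.le (by omega)
      have hpow : (0:ℝ) < r^n₀ := pow_pos hr0 _
      calc |Real.log (psiStar q (k+1) (s+t₁*ε) (s+t₂*ε) (x+y₂*ε) / phiStar q (k+1) (s+t₁*ε) (s+t₂*ε) (x+y₁*ε) (x+y₂*ε))| ≤ B := hfB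
        _ = (B / r^n₀) * r^n₀ := by field_simp
        _ ≤ Bb * r^(k+1) := mul_le_mul (le_max_right _ _) h1 hpow.le
            (le_trans (div_nonneg hB0 hpow.le) (le_max_right _ _))
  have hS_sum : ∀ ε ∈ Set.Icc (0:ℝ) δ,
      Summable (fun k : ℕ => Real.log (psiStar q (k+1) (s+t₁*ε) (s+t₂*ε) (x+y₂*ε) / phiStar q (k+1) (s+t₁*ε) (s+t₂*ε) (x+y₁*ε) (x+y₂*ε))) := by
    intro ε hε
    exact Summable.of_norm_bounded hbnd_sum
      (fun k => by rw [Real.norm_eq_abs]; exact hbnd ε hε k)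
  have hprod : ∀ ε ∈ Set.Icc (0:ℝ) δ,
      (∏' (k : ℕ), psiStar q (k+1) (s+t₁*ε) (s+t₂*ε) (x+y₂*ε) / phiStar q (k+1) (s+t₁*ε) (s+t₂*ε) (x+y₁*ε) (x+y₂*ε)) = Real.exp (∑' (k : ℕ), Real.log (psiStar q (k+1) (s+t₁*ε) (s+t₂*ε) (x+y₂*ε) / phiStar q (k+1) (s+t₁*ε) (s+t₂*ε) (x+y₁*ε) (x+y₂*ε))) := by
    intro ε hε
    exact (hasProd_exp (fun k => (hmaster ε hε k).1) ((hS_sum ε hε).hasSum)).tprod_eq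
  -- values at ε = 0
  have hj : ∀ j : ℕ, (0:ℝ) < 1 - q^(j+1) := by
    intro j
    have h : |q^(j+1)| < 1 := by
      rw [abs_pow]; exact pow_lt_one₀ (abs_nonneg q) hqabs (by omega)
    linarith [(abs_lt.1 h).2]
  have hφ0 : ∀ k : ℕ, 0 < phiT q s s x x (q^(k+1)) := by
    intro k
    have h := hφpos ((q:ℝ)^(k+1), (0:ℝ)) (hmemK 0 (Set.mem_Icc.2 ⟨le_refl 0, hδ0.le⟩) k)
    simpa using h
  have hψ0 : ∀ k : ℕ, 0 < psiT q s s x (q^(k+1)) := by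
    intro k
    have h := hψpos ((q:ℝ)^(k+1), (0:ℝ)) (hmemK 0 (Set.mem_Icc.2 ⟨le_refl 0, hδ0.le⟩) k)
    simpa using h
  have hval0 : ∀ k : ℕ, psiStar q (k+1) s s x / phiStar q (k+1) s s x x
      = (1 - q^(k+2))/(1 - q^(k+1)) := by
    intro k
    rw [div_eq_div_iff (by rw [phiStar_succ]; exact ne_of_gt (hφ0 k)) (ne_of_gt (hj k))]
    rw [psiStar_succ, phiStar_succ, psiT, phiT, show (q:ℝ)^(k+2) = q^(k+1)*q by ring]
    ring
  -- dominated convergence for the sum of logs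
  have hDC : Filter.Tendsto
      (fun ε : ℝ => ∑' (k : ℕ), Real.log (psiStar q (k+1) (s+t₁*ε) (s+t₂*ε) (x+y₂*ε) / phiStar q (k+1) (s+t₁*ε) (s+t₂*ε) (x+y₁*ε) (x+y₂*ε)))
      (nhdsWithin 0 (Set.Ioi 0))
      (nhds (∑' (k : ℕ), Real.log ((1 - q^(k+2))/(1 - q^(k+1))))) := by
    apply tendsto_tsum_of_dominated_convergence hbnd_sum
    · intro k
      have hψc : Continuous (fun ε : ℝ => psiStar q (k+1) (s+t₁*ε) (s+t₂*ε) (x+y₂*ε)) := by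
        simp only [psiStar]; fun_prop
      have hφc : Continuous (fun ε : ℝ => phiStar q (k+1) (s+t₁*ε) (s+t₂*ε) (x+y₁*ε) (x+y₂*ε)) := by
        simp only [phiStar]; fun_prop
      have hφ0' : phiStar q (k+1) (s+t₁*(0:ℝ)) (s+t₂*(0:ℝ)) (x+y₁*(0:ℝ)) (x+y₂*(0:ℝ)) ≠ 0 := by
        simp only [mul_zero, add_zero]
        rw [phiStar_succ]
        exact ne_of_gt (hφ0 k)
      have hratio : ContinuousAt (fun ε : ℝ => psiStar q (k+1) (s+t₁*ε) (s+t₂*ε) (x+y₂*ε) / phiStar q (k+1) (s+t₁*ε) (s+t₂*ε) (x+y₁*ε) (x+y₂*ε)) 0 :=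
        ContinuousAt.div hψc.continuousAt hφc.continuousAt hφ0'
      have hval00 : psiStar q (k+1) (s+t₁*(0:ℝ)) (s+t₂*(0:ℝ)) (x+y₂*(0:ℝ)) / phiStar q (k+1) (s+t₁*(0:ℝ)) (s+t₂*(0:ℝ)) (x+y₁*(0:ℝ)) (x+y₂*(0:ℝ)) = (1 - q^(k+2))/(1 - q^(k+1)) := by
        simp only [mul_zero, add_zero]
        exact hval0 k
      have hne0 : psiStar q (k+1) (s+t₁*(0:ℝ)) (s+t₂*(0:ℝ)) (x+y₂*(0:ℝ)) / phiStar q (k+1) (s+t₁*(0:ℝ)) (s+t₂*(0:ℝ)) (x+y₁*(0:ℝ)) (x+y₂*(0:ℝ)) ≠ 0 := by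
        rw [hval00]
        exact ne_of_gt (div_pos (hj (k+1)) (hj k))
      have h := (Real.continuousAt_log hne0).tendsto.comp hratio.tendsto
      have h2 : Real.log (psiStar q (k+1) (s+t₁*(0:ℝ)) (s+t₂*(0:ℝ)) (x+y₂*(0:ℝ)) / phiStar q (k+1) (s+t₁*(0:ℝ)) (s+t₂*(0:ℝ)) (x+y₁*(0:ℝ)) (x+y₂*(0:ℝ))) = Real.log ((1 - q^(k+2))/(1 - q^(k+1))) := by
        rw [hval00]
      rw [h2] at h
      exact h.mono_left nhdsWithin_le_nhds
    · filter_upwards [Ioo_mem_nhdsGT_of_mem (Set.left_mem_Ico.2 hδ0)] with ε hε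
      intro k
      rw [Real.norm_eq_abs]
      exact hbnd ε (Set.mem_Icc.2 ⟨hε.1.le, hε.2.le⟩) k
  -- value of the limiting sum
  have hgbound : ∀ k : ℕ, ‖Real.log ((1 - q^(k+2))/(1 - q^(k+1)))‖ ≤ bnd k := by
    intro k
    have h0 := hbnd 0 (Set.mem_Icc.2 ⟨le_refl 0, hδ0.le⟩) k
    simp only [mul_zero, add_zero] at h0
    rw [hval0 k] at h0
    rwa [Real.norm_eq_abs]
  have hgsum : Summable (fun k : ℕ => Real.log ((1 - q^(k+2))/(1 - q^(k+1)))) :=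
    Summable.of_norm_bounded hbnd_sum hgbound
  have htel : ∀ n : ℕ, ∑ k ∈ Finset.range n, Real.log ((1 - q^(k+2))/(1 - q^(k+1)))
      = Real.log (1 - q^(n+1)) - Real.log (1 - q) := by
    intro n
    have h := Finset.sum_range_sub (fun j => Real.log (1 - q^(j+1))) n
    calc ∑ k ∈ Finset.range n, Real.log ((1 - q^(k+2))/(1 - q^(k+1)))
        = ∑ k ∈ Finset.range n,
            (Real.log (1 - q^(k+1+1)) - Real.log (1 - q^(k+1))) := by
          apply Finset.sum_congr rfl
          intro k _
          rw [Real.log_div (ne_of_gt (hj (k+1))) (ne_of_gt (hj k))]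
      _ = Real.log (1 - q^(n+1)) - Real.log (1 - q^(0+1)) := h
      _ = Real.log (1 - q^(n+1)) - Real.log (1 - q) := by norm_num
  have hpartlim : Filter.Tendsto
      (fun n : ℕ => ∑ k ∈ Finset.range n, Real.log ((1 - q^(k+2))/(1 - q^(k+1))))
      Filter.atTop (nhds (0 - Real.log (1-q))) := by
    apply Filter.Tendsto.congr (fun n => (htel n).symm)
    have h1 : Filter.Tendsto (fun n : ℕ => q^(n+1)) Filter.atTop (nhds 0) := by
      have h := tendsto_pow_atTop_nhds_zero_of_norm_lt_one (x := q)
        (by rwa [Real.norm_eq_abs])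
      exact h.comp (Filter.tendsto_add_atTop_nat 1)
    have h2 : Filter.Tendsto (fun n : ℕ => Real.log (1 - q^(n+1)))
        Filter.atTop (nhds 0) := by
      have hc : ContinuousAt (fun z : ℝ => Real.log (1 - z)) 0 := by
        apply ContinuousAt.comp (Real.continuousAt_log (by norm_num : (1:ℝ) - 0 ≠ 0))
        fun_prop
      have h := hc.tendsto.comp h1
      simpa [Function.comp_def] using h
    exact h2.sub_const (Real.log (1-q))
  have htsumval : (∑' (k : ℕ), Real.log ((1 - q^(k+2))/(1 - q^(k+1))))
      = 0 - Real.log (1-q) := by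
    have hnorm : Summable (fun k : ℕ => ‖Real.log ((1 - q^(k+2))/(1 - q^(k+1)))‖) :=
      hbnd_sum.of_nonneg_of_le (fun k => norm_nonneg _) hgbound
    have h := (hasSum_iff_tendsto_nat_of_summable_norm hnorm).1 hgsum.hasSum
    exact tendsto_nhds_unique h hpartlim
  -- the eventual identity
  have hfeq : ∀ᶠ ε in nhdsWithin (0:ℝ) (Set.Ioi 0),
      ε * kappaQ q (s + t₁*ε) (s + t₂*ε) (x + y₁*ε) (x + y₂*ε)
      = (1-q)^((3:ℝ)/2)*(t₂-t₁)/(2*Real.pi)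
        * (Real.sqrt (4*(s+t₂*ε) - (1-q)*(x+y₂*ε)^2) / (D + (1-q)*(y₂-y₁)*(t₁*y₂-t₂*y₁)*ε))
        * Real.exp (∑' (k : ℕ), Real.log (psiStar q (k+1) (s+t₁*ε) (s+t₂*ε) (x+y₂*ε) / phiStar q (k+1) (s+t₁*ε) (s+t₂*ε) (x+y₁*ε) (x+y₂*ε))) := by
    filter_upwards [Ioo_mem_nhdsGT_of_mem (Set.left_mem_Ico.2 hδ0)] with ε hε
    have hεI : ε ∈ Set.Icc (0:ℝ) δ := Set.mem_Icc.2 ⟨hε.1.le, hε.2.le⟩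
    rw [kappaQ, hprod ε hεI]
    have hφ0eq : phiStar q 0 (s+t₁*ε) (s+t₂*ε) (x+y₁*ε) (x+y₂*ε)
        = ε^2 * (D + (1-q)*(y₂-y₁)*(t₁*y₂-t₂*y₁)*ε) := by
      rw [phiStar, hDdef]
      norm_num
      ring
    have hgpos : 0 < D + (1-q)*(y₂-y₁)*(t₁*y₂-t₂*y₁)*ε := lt_trans (half_pos hD) (hreg ε hεI).2.2.2.2.2
    have hεne : ε ≠ 0 := ne_of_gt hε.1
    have hgne : (D + (1-q)*(y₂-y₁)*(t₁*y₂-t₂*y₁)*ε) ≠ 0 := ne_of_gt hgpos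
    have hπ : (2:ℝ)*Real.pi ≠ 0 := by positivity
    rw [hφ0eq, show (s + t₂*ε) - (s + t₁*ε) = (t₂-t₁)*ε by ring]
    exact final_alg _ _ _ _ _ _ _ hεne hgne hπ
  -- the limit of the right-hand side
  have hT1 : Filter.Tendsto (fun ε : ℝ =>
      Real.sqrt (4*(s+t₂*ε) - (1-q)*(x+y₂*ε)^2) / (D + (1-q)*(y₂-y₁)*(t₁*y₂-t₂*y₁)*ε))
      (nhdsWithin 0 (Set.Ioi 0)) (nhds (Real.sqrt (4*s - (1-q)*x^2) / D)) := by
    have hc : ContinuousAt (fun ε : ℝ =>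
        Real.sqrt (4*(s+t₂*ε) - (1-q)*(x+y₂*ε)^2) / (D + (1-q)*(y₂-y₁)*(t₁*y₂-t₂*y₁)*ε)) 0 := by
      apply ContinuousAt.div
      · exact (Real.continuous_sqrt.comp (by fun_prop)).continuousAt
      · fun_prop
      · simp only [mul_zero, add_zero]
        exact hD.ne'
    have h := hc.tendsto.mono_left (nhdsWithin_le_nhds (s := Set.Ioi (0:ℝ)))
    simpa using h
  have hT2 : Filter.Tendsto (fun ε : ℝ =>
      Real.exp (∑' (k : ℕ), Real.log (psiStar q (k+1) (s+t₁*ε) (s+t₂*ε) (x+y₂*ε) / phiStar q (k+1) (s+t₁*ε) (s+t₂*ε) (x+y₁*ε) (x+y₂*ε))))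
      (nhdsWithin 0 (Set.Ioi 0)) (nhds ((1-q)⁻¹)) := by
    have h := Real.continuous_exp.continuousAt.tendsto.comp hDC
    have h2 : Real.exp (∑' (k : ℕ), Real.log ((1 - q^(k+2))/(1 - q^(k+1)))) = (1-q)⁻¹ := by
      rw [htsumval, zero_sub, Real.exp_neg, Real.exp_log h1q]
    rw [h2] at h
    exact h
  have hmain : Filter.Tendsto (fun ε : ℝ =>
      (1-q)^((3:ℝ)/2)*(t₂-t₁)/(2*Real.pi)
        * (Real.sqrt (4*(s+t₂*ε) - (1-q)*(x+y₂*ε)^2) / (D + (1-q)*(y₂-y₁)*(t₁*y₂-t₂*y₁)*ε))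
        * Real.exp (∑' (k : ℕ), Real.log (psiStar q (k+1) (s+t₁*ε) (s+t₂*ε) (x+y₂*ε) / phiStar q (k+1) (s+t₁*ε) (s+t₂*ε) (x+y₁*ε) (x+y₂*ε))))
      (nhdsWithin 0 (Set.Ioi 0))
      (nhds ((1/(2*Real.pi)) * (Real.sqrt (1-q) * (t₂-t₁) * Real.sqrt (4*s - (1-q)*x^2)) / D)) := by
    have h := (Filter.Tendsto.mul
      (tendsto_const_nhds (x := (1-q)^((3:ℝ)/2)*(t₂-t₁)/(2*Real.pi))) hT1).mul hT2
    have hvalue : (1/(2*Real.pi)) * (Real.sqrt (1-q) * (t₂-t₁) * Real.sqrt (4*s - (1-q)*x^2)) / D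
        = (1-q)^((3:ℝ)/2)*(t₂-t₁)/(2*Real.pi) * (Real.sqrt (4*s - (1-q)*x^2) / D) * (1-q)⁻¹ := by
      have h32 : (1-q)^((3:ℝ)/2) = (1-q) * Real.sqrt (1-q) := by
        rw [show ((3:ℝ)/2) = 1 + 1/2 by norm_num, Real.rpow_add h1q, Real.rpow_one,
          ← Real.sqrt_eq_rpow]
      rw [h32]
      exact final_val _ _ _ _ _ _ (by positivity) (ne_of_gt hD) (ne_of_gt h1q)
    rw [hvalue]
    exact h
  have hfeq' := hfeq.mono (fun ε h => h.symm)
  exact Filter.Tendsto.congr' hfeq' hmain
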